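/- Let K be a semiring and let φ be a map from the set {0,1}⁺ of nonempty binary words to K that is injective and satisfies φ(uv) = φ(u)·φ(v) for all nonempty binary words u, v. Fix k ≥ 1 and nonempty binary words u_1,…,u_k, v_1,…,v_k, and put A(u,v) = [[φ(u), 0],[0, φ(v)]] and B(u,v) = [[φ(u), 0],[φ(v), 0]] in K^{2×2}. Then the finite set { A(u_i,v_i) : 1 ≤ i ≤ k } ∪ { B(u_1,v_1) } is synchronizable if and only if there exist t ≥ 1 and indices i_1,…,i_t ∈ {1,…,k} with i_t = 1 such that u_{i_1}u_{i_2}⋯u_{i_t} = v_{i_1}v_{i_2}⋯v_{i_t}. -/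

import Mathlib

/-- A `2 × 2` matrix is *synchronizing* if there is a column index `i` such that an entry
`A j k` is nonzero exactly when `k = i`, and all entries of that column coincide. -/
def IsSync {K : Type*} [Semiring K] (A : Matrix (Fin 2) (Fin 2) K) : Prop :=
  ∃ i, (∀ j k, A j k ≠ 0 ↔ k = i) ∧ (∀ j j', A j i = A j' i)

/-- A set of matrices is *synchronizable* if some nonempty finite product of its elements
(with repetitions allowed) is synchronizing. -/
def IsSynchronizable {K : Type*} [Semiring K] (S : Set (Matrix (Fin 2) (Fin 2) K)) : Prop :=
  ∃ l : List (Matrix (Fin 2) (Fin 2) K), l ≠ [] ∧ (∀ A ∈ l, A ∈ S) ∧ IsSync l.prod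

/-- Let `φ` be an injective multiplicative embedding of the free semigroup of nonempty binary
words into a semiring `K`, and let `A(u,v) = [[φ u, 0],[0, φ v]]`,
`B(u,v) = [[φ u, 0],[φ v, 0]]`. For nonempty words `u 0, …, u (k-1), v 0, …, v (k-1)`, the set
`{A (u i, v i) : i} ∪ {B (u 0, v 0)}` is synchronizable iff there is an index sequence
`i_1, …, i_t` (`t ≥ 1`) ending with the first index such that
`u i₁ ⋯ u iₜ = v i₁ ⋯ v iₜ`. -/
theorem fpcp_reduces_to_sync {K : Type*} [Semiring K] (φ : List Bool → K)
    (hinj : ∀ u v : List Bool, u ≠ [] → v ≠ [] → φ u = φ v → u = v)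
    (hmul : ∀ u v : List Bool, u ≠ [] → v ≠ [] → φ (u ++ v) = φ u * φ v)
    {k : ℕ} (hk : 1 ≤ k) (u v : Fin k → List Bool)
    (hu : ∀ i, u i ≠ []) (hv : ∀ i, v i ≠ []) :
    IsSynchronizable
        ({M : Matrix (Fin 2) (Fin 2) K | ∃ i, M = !![φ (u i), 0; 0, φ (v i)]} ∪
          {!![φ (u ⟨0, hk⟩), 0; φ (v ⟨0, hk⟩), 0]}) ↔
      ∃ l : List (Fin k),
        ((l ++ [(⟨0, hk⟩ : Fin k)]).map u).flatten =
          ((l ++ [(⟨0, hk⟩ : Fin k)]).map v).flatten := by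
  set z : Fin k := ⟨0, hk⟩ with hz
  -- `φ` never takes the value `0` on nonempty words
  have hφne : ∀ w : List Bool, w ≠ [] → φ w ≠ 0 := by
    intro w hw h0
    have h1 : φ (w ++ [true]) = 0 := by
      rw [hmul w [true] hw (by simp), h0, zero_mul]
    have h2 : φ (w ++ [false]) = 0 := by
      rw [hmul w [false] hw (by simp), h0, zero_mul]
    have := hinj _ _ (by simp) (by simp) (h1.trans h2.symm)
    simp at this
  have hne : ∀ (a b : List Bool), a ≠ [] → a ++ b ≠ [] := by
    intro a b ha h
    exact ha (List.append_eq_nil_iff.mp h).1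
  have hUne : ∀ l : List (Fin k), l ≠ [] → ((l.map u).flatten : List Bool) ≠ [] := by
    intro l hl
    cases l with
    | nil => exact absurd rfl hl
    | cons a t =>
        simp only [List.map_cons, List.flatten_cons]
        exact hne _ _ (hu a)
  have hVne : ∀ l : List (Fin k), l ≠ [] → ((l.map v).flatten : List Bool) ≠ [] := by
    intro l hl
    cases l with
    | nil => exact absurd rfl hl
    | cons a t =>
        simp only [List.map_cons, List.flatten_cons]
        exact hne _ _ (hv a)
  -- the key structural invariant for products over the set
  have key : ∀ m : List (Matrix (Fin 2) (Fin 2) K), m ≠ [] →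
      (∀ M ∈ m, (∃ i, M = !![φ (u i), 0; 0, φ (v i)]) ∨ M = !![φ (u z), 0; φ (v z), 0]) →
      (∃ idx : List (Fin k), idx ≠ [] ∧
          m.prod = !![φ ((idx.map u).flatten), 0; 0, φ ((idx.map v).flatten)]) ∨
      (∃ p s : List (Fin k),
          m.prod = !![φ (((p ++ z :: s).map u).flatten), 0;
                      φ ((((p ++ [z]).map v).flatten) ++ ((s.map u).flatten)), 0]) := by
    intro m
    induction m with
    | nil => intro h; exact absurd rfl h
    | cons M t ih =>
      intro _ hmem
      have hM := hmem M (by simp)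
      by_cases ht : t = []
      · subst ht
        rcases hM with ⟨i, rfl⟩ | rfl
        · exact Or.inl ⟨[i], by simp, by simp⟩
        · exact Or.inr ⟨[], [], by simp⟩
      · have IH := ih ht (fun M hM => hmem M (List.mem_cons_of_mem _ hM))
        rw [List.prod_cons]
        rcases hM with ⟨i, rfl⟩ | rfl
        · rcases IH with ⟨idx, hidx, hprod⟩ | ⟨p, s, hprod⟩
          · refine Or.inl ⟨i :: idx, by simp, ?_⟩
            rw [hprod, Matrix.mul_fin_two]
            simp only [List.map_cons, List.flatten_cons,
              hmul _ _ (hu i) (hUne idx hidx), hmul _ _ (hv i) (hVne idx hidx)]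
            simp
          · refine Or.inr ⟨i :: p, s, ?_⟩
            rw [hprod, Matrix.mul_fin_two]
            simp only [List.cons_append, List.map_cons, List.flatten_cons,
              hmul _ _ (hu i) (hUne (p ++ z :: s) (by simp)),
              hmul _ _ (hv i) (hne _ _ (hVne (p ++ [z]) (by simp))), List.append_assoc]
            simp
        · rcases IH with ⟨idx, hidx, hprod⟩ | ⟨p, s, hprod⟩
          · refine Or.inr ⟨[], idx, ?_⟩
            rw [hprod, Matrix.mul_fin_two]
            simp only [List.nil_append, List.map_cons, List.map_nil, List.flatten_cons,
              List.flatten_nil, List.append_nil,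
              hmul _ _ (hu z) (hUne idx hidx), hmul _ _ (hv z) (hUne idx hidx)]
            simp
          · refine Or.inr ⟨[], p ++ z :: s, ?_⟩
            rw [hprod, Matrix.mul_fin_two]
            simp only [List.nil_append, List.map_cons, List.map_nil, List.flatten_cons,
              List.flatten_nil, List.append_nil,
              hmul _ _ (hu z) (hUne (p ++ z :: s) (by simp)),
              hmul _ _ (hv z) (hUne (p ++ z :: s) (by simp))]
            simp
  constructor
  · rintro ⟨m, hm, hmemS, hsync⟩
    have hmem' : ∀ M ∈ m,
        (∃ i, M = !![φ (u i), 0; 0, φ (v i)]) ∨ M = !![φ (u z), 0; φ (v z), 0] := by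
      intro M hM
      rcases hmemS M hM with h | h
      · exact Or.inl h
      · exact Or.inr h
    rcases key m hm hmem' with ⟨idx, hidx, hprod⟩ | ⟨p, s, hprod⟩
    · obtain ⟨i, hcol, _⟩ := hsync
      rw [hprod] at hcol
      have h00 : (0 : Fin 2) = i :=
        (hcol 0 0).mp (by simpa using hφne _ (hUne idx hidx))
      have h11 : (1 : Fin 2) = i :=
        (hcol 1 1).mp (by simpa using hφne _ (hVne idx hidx))
      exact absurd (h11.trans h00.symm) (by decide)
    · obtain ⟨i, hcol, heq⟩ := hsync
      rw [hprod] at hcol heq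
      have h00 : (0 : Fin 2) = i :=
        (hcol 0 0).mp (by simpa using hφne _ (hUne (p ++ z :: s) (by simp)))
      subst h00
      have heq01 := heq 0 1
      simp only [Matrix.of_apply, Matrix.cons_val', Matrix.cons_val_zero, Matrix.empty_val',
        Matrix.cons_val_fin_one, Matrix.cons_val_one, Matrix.head_cons,
        Matrix.head_fin_const] at heq01
      have hwords := hinj _ _ (hUne (p ++ z :: s) (by simp))
        (hne _ _ (hVne (p ++ [z]) (by simp))) heq01
      have hsplit : p ++ z :: s = (p ++ [z]) ++ s := by simp
      rw [hsplit, List.map_append, List.flatten_append] at hwords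
      exact ⟨p, List.append_cancel_right hwords⟩
  · rintro ⟨l, hl⟩
    have prodlem : ∀ l' : List (Fin k),
        ((l'.map (fun i => !![φ (u i), 0; 0, φ (v i)])) ++
            [!![φ (u z), 0; φ (v z), 0]]).prod
          = !![φ (((l' ++ [z]).map u).flatten), 0; φ (((l' ++ [z]).map v).flatten), 0] := by
      intro l'
      induction l' with
      | nil => simp
      | cons i t iht =>
        simp only [List.map_cons, List.cons_append, List.prod_cons, iht,
          Matrix.mul_fin_two, List.flatten_cons]
        rw [hmul _ _ (hu i) (hUne (t ++ [z]) (by simp)),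
          hmul _ _ (hv i) (hVne (t ++ [z]) (by simp))]
        simp
    refine ⟨(l.map (fun i => !![φ (u i), 0; 0, φ (v i)])) ++
        [!![φ (u z), 0; φ (v z), 0]], by simp, ?_, ?_⟩
    · intro M hM
      rcases List.mem_append.mp hM with h | h
      · obtain ⟨i, _, rfl⟩ := List.mem_map.mp h
        exact Or.inl ⟨i, rfl⟩
      · simp only [List.mem_singleton] at h
        exact Or.inr h
    · rw [prodlem l]
      refine ⟨0, ?_, ?_⟩
      · intro j k'
        have hA := hφne _ (hUne (l ++ [z]) (by simp))
        have hB := hφne _ (hVne (l ++ [z]) (by simp))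
        have hl' := hl
        simp only [List.map_append, List.flatten_append, List.map_cons, List.map_nil,
          List.flatten_cons, List.flatten_nil, List.append_nil] at hA hB hl'
        fin_cases j <;> fin_cases k' <;> simp [hA, hB, hl']
      · intro j j'
        have hl' := hl
        simp only [List.map_append, List.flatten_append, List.map_cons, List.map_nil,
          List.flatten_cons, List.flatten_nil, List.append_nil] at hl'
        fin_cases j <;> fin_cases j' <;> simp [hl']
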